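/- Let H be a hypothesis class and S, S' be independent i.i.d. samples of size m from a distribution D, with losses in [0,1]. Then for any ε > 0, (1 − 2·exp(−ε²m/2)) · P[sup_{h∈H} |L_S(h) − L_D(h)| > ε] ≤ P[sup_{h∈H} |L_S(h) − L_{S'}(h)| > ε/2], where L_S(h) is the empirical average loss of h on S and L_D(h) its expectation under D. -/

import Mathlib

open Finset MeasureTheory



open Real

/-- Hoeffding's lemma core inequality for `[0,1]`-valued variables with mean `p`. -/
lemma hoeff_core (p : ℝ) (hp0 : 0 ≤ p) (hp1 : p ≤ 1) (t : ℝ) :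
    1 - p + p * Real.exp t ≤ Real.exp (t * p + t ^ 2 / 8) := by
  have hs : ∀ u : ℝ, 0 < 1 - p + p * Real.exp u := by
    intro u
    rcases lt_or_ge u 0 with hu | hu
    · nlinarith [Real.exp_pos u, Real.exp_le_one_iff.2 hu.le,
        mul_nonneg hp0 (Real.exp_pos u).le]
    · nlinarith [Real.one_le_exp hu, mul_nonneg hp0 (Real.exp_pos u).le]
  set G : ℝ → ℝ := fun u => p + u / 4 - p * Real.exp u / (1 - p + p * Real.exp u) with hGdef
  set F : ℝ → ℝ := fun u => u * p + u ^ 2 / 8 - Real.log (1 - p + p * Real.exp u) with hFdef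
  have hsder : ∀ u : ℝ, HasDerivAt (fun v => 1 - p + p * Real.exp v) (p * Real.exp u) u := by
    intro u
    simpa using ((Real.hasDerivAt_exp u).const_mul p).const_add (1 - p)
  have hF : ∀ u : ℝ, HasDerivAt F (G u) u := by
    intro u
    have h1 : HasDerivAt (fun v : ℝ => v * p + v ^ 2 / 8) (p + 2 * u / 8) u := by
      have := ((hasDerivAt_id u).mul_const p).add
        (((hasDerivAt_pow 2 u)).div_const 8)
      simp at this; exact this
    have h2 : HasDerivAt (fun v => Real.log (1 - p + p * Real.exp v))
        (p * Real.exp u / (1 - p + p * Real.exp u)) u :=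
      (hsder u).log (hs u).ne'
    have := h1.sub h2
    refine this.congr_deriv ?_
    ring
  have hG : ∀ u : ℝ, HasDerivAt G
      (1 / 4 - p * Real.exp u * (1 - p) / (1 - p + p * Real.exp u) ^ 2) u := by
    intro u
    have hdiv : HasDerivAt (fun v => p * Real.exp v / (1 - p + p * Real.exp v))
        ((p * Real.exp u * (1 - p + p * Real.exp u) - p * Real.exp u * (p * Real.exp u)) /
          (1 - p + p * Real.exp u) ^ 2) u :=
      ((Real.hasDerivAt_exp u).const_mul p).div (hsder u) (hs u).ne'
    have := ((hasDerivAt_id u).div_const 4).const_add p |>.sub hdiv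
    refine this.congr_deriv ?_
    have := (hs u).ne'
    field_simp
    ring
  have hGmono : Monotone G := by
    refine monotone_of_deriv_nonneg (fun u => (hG u).differentiableAt) (fun u => ?_)
    rw [(hG u).deriv]
    have h1 := hs u
    have h2 : p * Real.exp u * (1 - p) ≤ (1 - p + p * Real.exp u) ^ 2 / 4 := by
      nlinarith [sq_nonneg (1 - p - p * Real.exp u)]
    have h3 : p * Real.exp u * (1 - p) / (1 - p + p * Real.exp u) ^ 2 ≤ 1 / 4 := by
      rw [div_le_div_iff₀ (by positivity) (by norm_num)]
      nlinarith
    linarith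
  have hG0 : G 0 = 0 := by simp [hGdef]
  have hF0 : F 0 = 0 := by simp [hFdef]
  have hFt : 0 ≤ F t := by
    rcases le_total 0 t with ht | ht
    · have hmono : MonotoneOn F (Set.Ici (0:ℝ)) := by
        refine monotoneOn_of_deriv_nonneg (convex_Ici 0)
          (fun u _ => (hF u).differentiableAt.continuousAt.continuousWithinAt)
          (fun u _ => (hF u).differentiableAt.differentiableWithinAt)
          (fun u hu => ?_)
        rw [(hF u).deriv]
        rw [← hG0]
        exact hGmono (le_of_lt (by simpa using hu))
      have := hmono (Set.self_mem_Ici) (Set.mem_Ici.2 ht) ht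
      simpa [hF0] using this
    · have hmono : AntitoneOn F (Set.Iic (0:ℝ)) := by
        refine antitoneOn_of_deriv_nonpos (convex_Iic 0)
          (fun u _ => (hF u).differentiableAt.continuousAt.continuousWithinAt)
          (fun u _ => (hF u).differentiableAt.differentiableWithinAt)
          (fun u hu => ?_)
        rw [(hF u).deriv]
        rw [← hG0]
        exact hGmono (le_of_lt (by simpa using hu))
      have := hmono (Set.mem_Iic.2 ht) (Set.self_mem_Iic) ht
      simpa [hF0] using this
  have hlog : Real.log (1 - p + p * Real.exp t) ≤ t * p + t ^ 2 / 8 := by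
    have := hFt; simp only [hFdef] at this; linarith
  calc 1 - p + p * Real.exp t = Real.exp (Real.log (1 - p + p * Real.exp t)) :=
        (Real.exp_log (hs t)).symm
    _ ≤ Real.exp (t * p + t ^ 2 / 8) := Real.exp_le_exp.2 hlog

section MGF
open MeasureTheory

variable {Z : Type*} [MeasurableSpace Z] (μ : Measure Z) [IsProbabilityMeasure μ]

lemma integrable_of_bdd {f : Z → ℝ} (hm : Measurable f) (C : ℝ)
    (hb : ∀ z, |f z| ≤ C) : Integrable f μ := by
  refine (integrable_const C).mono' hm.aestronglyMeasurable ?_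
  exact Filter.Eventually.of_forall fun z => by simpa using hb z

lemma mgf_one {h : Z → ℝ} (hm : Measurable h) (hr : ∀ z, h z ∈ Set.Icc (0:ℝ) 1) (t : ℝ) :
    ∫ z, Real.exp (t * (h z - ∫ w, h w ∂μ)) ∂μ ≤ Real.exp (t ^ 2 / 8) := by
  set p : ℝ := ∫ w, h w ∂μ with hp
  have hint : Integrable h μ := integrable_of_bdd μ hm 1
    (fun z => abs_le.2 ⟨by linarith [(hr z).1], (hr z).2⟩)
  have hp0 : 0 ≤ p := integral_nonneg fun z => (hr z).1
  have hp1 : p ≤ 1 := by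
    calc p ≤ ∫ _ : Z, (1:ℝ) ∂μ := integral_mono hint (integrable_const 1) fun z => (hr z).2
    _ = 1 := by simp
  -- pointwise convexity bound
  have hpt : ∀ z, Real.exp (t * h z) ≤ 1 - h z + h z * Real.exp t := by
    intro z
    have h0 := (hr z).1; have h1 := (hr z).2
    have := convexOn_exp.2 (Set.mem_univ (0:ℝ)) (Set.mem_univ t)
      (by linarith : (0:ℝ) ≤ 1 - h z) h0 (by ring)
    simpa [smul_eq_mul, mul_comm] using this
  have hintexp : Integrable (fun z => Real.exp (t * h z)) μ := by
    refine integrable_of_bdd μ (by fun_prop) (Real.exp |t|) fun z => ?_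
    rw [abs_of_nonneg (Real.exp_nonneg _)]
    refine Real.exp_le_exp.2 ?_
    calc t * h z ≤ |t * h z| := le_abs_self _
      _ = |t| * |h z| := abs_mul _ _
      _ ≤ |t| * 1 := by
          refine mul_le_mul_of_nonneg_left ?_ (abs_nonneg t)
          rw [abs_of_nonneg (hr z).1]; exact (hr z).2
      _ = |t| := mul_one _
  have hI : ∫ z, Real.exp (t * h z) ∂μ ≤ 1 - p + p * Real.exp t := by
    have h2 : ∫ z, (1 - h z + h z * Real.exp t) ∂μ = 1 - p + p * Real.exp t := by
      have i1 : Integrable (fun z => 1 - h z) μ := (integrable_const (1:ℝ)).sub hint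
      have i2 : Integrable (fun z => h z * Real.exp t) μ := hint.mul_const _
      rw [integral_add i1 i2, integral_sub (integrable_const (1:ℝ)) hint, integral_mul_const]
      simp [hp]
    have i3 : Integrable (fun z => 1 - h z + h z * Real.exp t) μ :=
      ((integrable_const (1:ℝ)).sub hint).add (hint.mul_const _)
    have := integral_mono hintexp i3 hpt
    exact this.trans_eq h2
  have key : ∫ z, Real.exp (t * (h z - p)) ∂μ =
      (∫ z, Real.exp (t * h z) ∂μ) * Real.exp (-(t * p)) := by
    rw [← integral_mul_const]
    congr 1 with z
    rw [← Real.exp_add]; ring_nf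
  rw [key]
  calc (∫ z, Real.exp (t * h z) ∂μ) * Real.exp (-(t * p))
      ≤ (1 - p + p * Real.exp t) * Real.exp (-(t * p)) := by
        refine mul_le_mul_of_nonneg_right hI (Real.exp_nonneg _)
    _ ≤ Real.exp (t * p + t ^ 2 / 8) * Real.exp (-(t * p)) :=
        mul_le_mul_of_nonneg_right (hoeff_core p hp0 hp1 t) (Real.exp_nonneg _)
    _ = Real.exp (t ^ 2 / 8) := by rw [← Real.exp_add]; ring_nf

end MGF

section Tail
open MeasureTheory ProbabilityTheory

variable {Z : Type*} [MeasurableSpace Z] (μ : Measure Z) [IsProbabilityMeasure μ]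

lemma mgf_sum_le {m : ℕ} {h : Z → ℝ} (hm : Measurable h)
    (hr : ∀ z, h z ∈ Set.Icc (0:ℝ) 1) (t : ℝ) :
    ∫ S : Fin m → Z, Real.exp (t * ∑ i, (h (S i) - ∫ w, h w ∂μ))
        ∂(Measure.pi fun _ : Fin m => μ)
      ≤ Real.exp ((m : ℝ) * t ^ 2 / 8) := by
  letI : MeasureSpace Z := ⟨μ⟩
  haveI : SigmaFinite (volume : Measure Z) := by
    show SigmaFinite μ; infer_instance
  set p : ℝ := ∫ w, h w ∂μ
  have hrw : ∀ S : Fin m → Z, Real.exp (t * ∑ i, (h (S i) - p))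
      = ∏ i : Fin m, Real.exp (t * (h (S i) - p)) := by
    intro S
    rw [Finset.mul_sum, Real.exp_sum]
  calc ∫ S : Fin m → Z, Real.exp (t * ∑ i, (h (S i) - p))
          ∂(Measure.pi fun _ : Fin m => μ)
      = ∫ S : Fin m → Z, ∏ i : Fin m, Real.exp (t * (h (S i) - p))
          ∂(Measure.pi fun _ : Fin m => μ) := by
        simp_rw [hrw]
    _ = ∏ _i : Fin m, ∫ z, Real.exp (t * (h z - p)) ∂μ := by
        rw [show (Measure.pi fun _ : Fin m => μ) = (volume : Measure (Fin m → Z)) from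
          (volume_pi).symm]
        exact MeasureTheory.integral_fintype_prod_eq_prod
          (fun _ z => Real.exp (t * (h z - p)))
    _ ≤ ∏ _i : Fin m, Real.exp (t ^ 2 / 8) := by
        refine Finset.prod_le_prod (fun _ _ => integral_nonneg fun z => (Real.exp_nonneg _))
          (fun _ _ => mgf_one μ hm hr t)
    _ = Real.exp ((m : ℝ) * t ^ 2 / 8) := by
        rw [Finset.prod_const]
        rw [← Real.exp_nat_mul]
        norm_num
        ring_nf

lemma tail_le {m : ℕ} {h : Z → ℝ} (hm : Measurable h)
    (hr : ∀ z, h z ∈ Set.Icc (0:ℝ) 1) {a : ℝ} (ha : 0 < a) :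
    ((Measure.pi fun _ : Fin m => μ)
        {S | (m : ℝ) * a ≤ ∑ i, (h (S i) - ∫ w, h w ∂μ)}).toReal
      ≤ Real.exp (-2 * m * a ^ 2) := by
  set p : ℝ := ∫ w, h w ∂μ with hp
  have hp0 : 0 ≤ p := integral_nonneg fun z => (hr z).1
  have hp1 : p ≤ 1 := by
    have hint : Integrable h μ := integrable_of_bdd μ hm 1
      (fun z => abs_le.2 ⟨by linarith [(hr z).1], (hr z).2⟩)
    calc p ≤ ∫ _ : Z, (1:ℝ) ∂μ := integral_mono hint (integrable_const 1) fun z => (hr z).2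
      _ = 1 := by simp
  set X : (Fin m → Z) → ℝ := fun S => ∑ i, (h (S i) - p) with hX
  have hXmeas : Measurable X := by
    apply Finset.measurable_sum
    intro i _
    exact (hm.comp (measurable_pi_apply i)).sub measurable_const
  have hXbdd : ∀ S, |X S| ≤ m := by
    intro S
    calc |X S| ≤ ∑ i : Fin m, |h (S i) - p| := Finset.abs_sum_le_sum_abs _ _
      _ ≤ ∑ _i : Fin m, (1:ℝ) := by
          refine Finset.sum_le_sum fun i _ => abs_le.2
            ⟨by linarith [(hr (S i)).1], by linarith [(hr (S i)).2]⟩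
      _ = m := by simp
  have hint : Integrable (fun S => Real.exp (4 * a * X S)) (Measure.pi fun _ : Fin m => μ) := by
    refine integrable_of_bdd _ (by fun_prop) (Real.exp (4 * a * m)) fun S => ?_
    rw [abs_of_nonneg (Real.exp_nonneg _)]
    refine Real.exp_le_exp.2 ?_
    calc 4 * a * X S ≤ |4 * a * X S| := le_abs_self _
      _ = (4 * a) * |X S| := by rw [abs_mul, abs_of_nonneg (by linarith : (0:ℝ) ≤ 4 * a)]
      _ ≤ (4 * a) * m := by
          exact mul_le_mul_of_nonneg_left (hXbdd S) (by linarith)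
      _ = 4 * a * m := rfl
  have hcher := measure_ge_le_exp_mul_mgf (X := X) (μ := Measure.pi fun _ : Fin m => μ)
    ((m : ℝ) * a) (by linarith : (0:ℝ) ≤ 4 * a) hint
  refine hcher.trans ?_
  have hmgf : mgf X (Measure.pi fun _ : Fin m => μ) (4 * a)
      ≤ Real.exp ((m : ℝ) * (4 * a) ^ 2 / 8) := mgf_sum_le μ hm hr (4 * a)
  calc Real.exp (-(4 * a) * ((m : ℝ) * a)) * mgf X (Measure.pi fun _ : Fin m => μ) (4 * a)
      ≤ Real.exp (-(4 * a) * ((m : ℝ) * a)) * Real.exp ((m : ℝ) * (4 * a) ^ 2 / 8) :=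
        mul_le_mul_of_nonneg_left hmgf (Real.exp_nonneg _)
    _ = Real.exp (-2 * m * a ^ 2) := by rw [← Real.exp_add]; ring_nf

end Tail

section Dev
open MeasureTheory

variable {Z : Type*} [MeasurableSpace Z] (μ : Measure Z) [IsProbabilityMeasure μ]

lemma deviation_le {m : ℕ} (hm : 0 < m) {h : Z → ℝ} (hmeas : Measurable h)
    (hr : ∀ z, h z ∈ Set.Icc (0:ℝ) 1) {ε : ℝ} (hε : 0 < ε) :
    (Measure.pi fun _ : Fin m => μ)
        {S | ε / 2 < |(1 / m : ℝ) * ∑ i, h (S i) - ∫ w, h w ∂μ|}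
      ≤ ENNReal.ofReal (2 * Real.exp (-(ε ^ 2) * m / 2)) := by
  set p : ℝ := ∫ w, h w ∂μ with hp
  have hint : Integrable h μ := integrable_of_bdd μ hmeas 1
    (fun z => abs_le.2 ⟨by linarith [(hr z).1], (hr z).2⟩)
  set g : Z → ℝ := fun z => 1 - h z with hg
  have hgmeas : Measurable g := measurable_const.sub hmeas
  have hgr : ∀ z, g z ∈ Set.Icc (0:ℝ) 1 := fun z =>
    ⟨by simp [hg]; linarith [(hr z).2], by simp [hg]; linarith [(hr z).1]⟩
  have hgint : ∫ w, g w ∂μ = 1 - p := by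
    rw [hg, integral_sub (integrable_const 1) hint]; simp [hp]
  set A : Set (Fin m → Z) := {S | (m : ℝ) * (ε / 2) ≤ ∑ i, (h (S i) - p)} with hA
  set B : Set (Fin m → Z) := {S | (m : ℝ) * (ε / 2) ≤ ∑ i, (g (S i) - ∫ w, g w ∂μ)} with hB
  have hsub : {S : Fin m → Z | ε / 2 < |(1 / m : ℝ) * ∑ i, h (S i) - p|} ⊆ A ∪ B := by
    intro S hS
    simp only [Set.mem_setOf_eq] at hS
    have hmpos : (0:ℝ) < m := Nat.cast_pos.2 hm
    have hsum : ∑ i, (h (S i) - p) = (∑ i, h (S i)) - m * p := by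
      rw [Finset.sum_sub_distrib]; simp [mul_comm]
    have hv : (1 / m : ℝ) * ∑ i, h (S i) - p = ((∑ i, h (S i)) - m * p) / m := by
      field_simp
    rcases lt_or_ge ((1 / m : ℝ) * ∑ i, h (S i) - p) 0 with hneg | hpos
    · right
      rw [hB]
      simp only [Set.mem_setOf_eq, hgint]; simp only [hg]
      have habs : ε / 2 < -((1 / m : ℝ) * ∑ i, h (S i) - p) := by
        rwa [abs_of_neg hneg] at hS
      have : ∑ i, (1 - h (S i) - (1 - p)) = -(∑ i, (h (S i) - p)) := by
        rw [← Finset.sum_neg_distrib]; congr 1 with i; ring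
      rw [this, hsum]
      rw [hv, ← neg_div, lt_div_iff₀ hmpos] at habs
      nlinarith
    · left
      rw [hA]
      simp only [Set.mem_setOf_eq]
      have habs : ε / 2 < (1 / m : ℝ) * ∑ i, h (S i) - p := by
        rwa [abs_of_nonneg hpos] at hS
      rw [hv, lt_div_iff₀ hmpos] at habs
      rw [hsum]
      nlinarith
  have hexp : Real.exp (-2 * m * (ε / 2) ^ 2) = Real.exp (-(ε ^ 2) * m / 2) := by
    congr 1; ring
  have hAle : (Measure.pi fun _ : Fin m => μ) A
      ≤ ENNReal.ofReal (Real.exp (-(ε ^ 2) * m / 2)) := by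
    rw [ENNReal.le_ofReal_iff_toReal_le (measure_ne_top _ _) (Real.exp_nonneg _)]
    rw [← hexp]
    exact tail_le μ hmeas hr (by linarith)
  have hBle : (Measure.pi fun _ : Fin m => μ) B
      ≤ ENNReal.ofReal (Real.exp (-(ε ^ 2) * m / 2)) := by
    rw [ENNReal.le_ofReal_iff_toReal_le (measure_ne_top _ _) (Real.exp_nonneg _)]
    rw [← hexp]
    exact tail_le μ hgmeas hgr (by linarith)
  calc (Measure.pi fun _ : Fin m => μ)
        {S | ε / 2 < |(1 / m : ℝ) * ∑ i, h (S i) - p|}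
      ≤ (Measure.pi fun _ : Fin m => μ) (A ∪ B) := measure_mono hsub
    _ ≤ (Measure.pi fun _ : Fin m => μ) A + (Measure.pi fun _ : Fin m => μ) B :=
        measure_union_le _ _
    _ ≤ ENNReal.ofReal (Real.exp (-(ε ^ 2) * m / 2))
        + ENNReal.ofReal (Real.exp (-(ε ^ 2) * m / 2)) := add_le_add hAle hBle
    _ = ENNReal.ofReal (2 * Real.exp (-(ε ^ 2) * m / 2)) := by
        rw [← ENNReal.ofReal_add (Real.exp_nonneg _) (Real.exp_nonneg _)]
        congr 1; ring

end Dev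



/-- Ghost-sampling (double sample) lemma.  Each `h ∈ H` is identified with its
loss function `Z → [0,1]`; `L_S h` is the empirical average on the sample `S`
and `L_D h = ∫ h ∂D` its expectation. -/
theorem ghost_sampling {Z : Type*} [MeasurableSpace Z]
    (D : Measure Z) [IsProbabilityMeasure D] (m : ℕ) (hm : 0 < m)
    (H : Set (Z → ℝ)) (hne : H.Nonempty) (hcount : H.Countable)
    (hmeas : ∀ h ∈ H, Measurable h) (hrange : ∀ h ∈ H, ∀ z, h z ∈ Set.Icc (0:ℝ) 1)
    (ε : ℝ) (hε : 0 < ε) :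
    (1 - 2 * Real.exp (-(ε ^ 2) * m / 2)) *
      ((Measure.pi fun _ : Fin m => D)
        {S : Fin m → Z | sSup {r : ℝ | ∃ h ∈ H,
          r = |(1 / m : ℝ) * ∑ i, h (S i) - ∫ z, h z ∂D|} > ε}).toReal ≤
    (((Measure.pi fun _ : Fin m => D).prod (Measure.pi fun _ : Fin m => D))
        {p : (Fin m → Z) × (Fin m → Z) | sSup {r : ℝ | ∃ h ∈ H,
          r = |(1 / m : ℝ) * ∑ i, h (p.1 i) - (1 / m : ℝ) * ∑ i, h (p.2 i)|} > ε / 2}).toReal := by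
  set δ : ℝ := 2 * Real.exp (-(ε ^ 2) * m / 2) with hδ
  have hδ0 : 0 ≤ δ := by positivity
  rcases le_or_gt (1 - δ) 0 with htriv | hδ1
  · exact le_trans (mul_nonpos_of_nonpos_of_nonneg htriv ENNReal.toReal_nonneg)
      ENNReal.toReal_nonneg
  set μm : Measure (Fin m → Z) := Measure.pi fun _ : Fin m => D with hμm
  have hmpos : (0:ℝ) < m := Nat.cast_pos.2 hm
  -- basic bounds on empirical and true means
  have hLb : ∀ (h : Z → ℝ), h ∈ H → ∀ S : Fin m → Z,
      (1 / m : ℝ) * ∑ i, h (S i) ∈ Set.Icc (0:ℝ) 1 := by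
    intro h hH S
    constructor
    · exact mul_nonneg (by positivity) (Finset.sum_nonneg fun i _ => (hrange h hH (S i)).1)
    · rw [← mul_le_mul_iff_right₀ hmpos, ← mul_assoc]
      have : (m : ℝ) * (1 / m) = 1 := by field_simp
      rw [this, one_mul, mul_one]
      calc ∑ i, h (S i) ≤ ∑ _i : Fin m, (1:ℝ) :=
            Finset.sum_le_sum fun i _ => (hrange h hH (S i)).2
        _ = m := by simp
  have hDb : ∀ (h : Z → ℝ), h ∈ H → (∫ z, h z ∂D) ∈ Set.Icc (0:ℝ) 1 := by
    intro h hH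
    have hint : Integrable h D := integrable_of_bdd D (hmeas h hH) 1
      (fun z => abs_le.2 ⟨by linarith [(hrange h hH z).1], (hrange h hH z).2⟩)
    refine ⟨integral_nonneg fun z => (hrange h hH z).1, ?_⟩
    calc ∫ z, h z ∂D ≤ ∫ _ : Z, (1:ℝ) ∂D :=
          integral_mono hint (integrable_const 1) fun z => (hrange h hH z).2
      _ = 1 := by simp
  -- identify the LHS event
  set A : Set (Fin m → Z) :=
    {S | ∃ h ∈ H, ε < |(1 / m : ℝ) * ∑ i, h (S i) - ∫ z, h z ∂D|} with hA
  have hAeq : {S : Fin m → Z | sSup {r : ℝ | ∃ h ∈ H,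
      r = |(1 / m : ℝ) * ∑ i, h (S i) - ∫ z, h z ∂D|} > ε} = A := by
    ext S
    have hRne : {r : ℝ | ∃ h ∈ H, r = |(1 / m : ℝ) * ∑ i, h (S i) - ∫ z, h z ∂D|}.Nonempty := by
      obtain ⟨h0, hh0⟩ := hne
      exact ⟨_, h0, hh0, rfl⟩
    have hRbdd : BddAbove {r : ℝ | ∃ h ∈ H, r = |(1 / m : ℝ) * ∑ i, h (S i) - ∫ z, h z ∂D|} := by
      refine ⟨1, fun r hr => ?_⟩
      obtain ⟨h, hH, rfl⟩ := hr
      have h1 := hLb h hH S; have h2 := hDb h hH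
      rw [abs_sub_le_iff]
      constructor <;> [linarith [h1.2, h2.1]; linarith [h1.1, h2.2]]
    simp only [Set.mem_setOf_eq, gt_iff_lt, hA]
    constructor
    · intro hlt
      obtain ⟨r, ⟨h, hH, rfl⟩, hr⟩ := exists_lt_of_lt_csSup hRne hlt
      exact ⟨h, hH, hr⟩
    · rintro ⟨h, hH, hgt⟩
      exact lt_of_lt_of_le hgt (le_csSup hRbdd ⟨h, hH, rfl⟩)
  -- the RHS event contains the "exists" event
  set B : Set ((Fin m → Z) × (Fin m → Z)) :=
    {p | ∃ h ∈ H, ε / 2 < |(1 / m : ℝ) * ∑ i, h (p.1 i) - (1 / m : ℝ) * ∑ i, h (p.2 i)|} with hB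
  have hBsub : B ⊆ {p : (Fin m → Z) × (Fin m → Z) | sSup {r : ℝ | ∃ h ∈ H,
      r = |(1 / m : ℝ) * ∑ i, h (p.1 i) - (1 / m : ℝ) * ∑ i, h (p.2 i)|} > ε / 2} := by
    rintro p ⟨h, hH, hgt⟩
    have hRbdd : BddAbove {r : ℝ | ∃ h ∈ H,
        r = |(1 / m : ℝ) * ∑ i, h (p.1 i) - (1 / m : ℝ) * ∑ i, h (p.2 i)|} := by
      refine ⟨1, fun r hr => ?_⟩
      obtain ⟨h', hH', rfl⟩ := hr
      have h1 := hLb h' hH' p.1; have h2 := hLb h' hH' p.2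
      rw [abs_sub_le_iff]
      constructor <;> [linarith [h1.2, h2.1]; linarith [h1.1, h2.2]]
    exact lt_of_lt_of_le hgt (le_csSup hRbdd ⟨h, hH, rfl⟩)
  -- measurability
  have hmeasLS : ∀ (h : Z → ℝ), h ∈ H →
      Measurable (fun S : Fin m → Z => (1 / m : ℝ) * ∑ i, h (S i)) := by
    intro h hH
    exact (Finset.measurable_sum Finset.univ
      (fun i _ => (hmeas h hH).comp (measurable_pi_apply i))).const_mul _
  have hAmeas : MeasurableSet A := by
    have : A = ⋃ h ∈ H, {S : Fin m → Z | ε < |(1 / m : ℝ) * ∑ i, h (S i) - ∫ z, h z ∂D|} := by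
      ext S; simp [hA, Set.mem_iUnion]
    rw [this]
    refine MeasurableSet.biUnion hcount fun h hH => ?_
    exact measurableSet_lt measurable_const
      (((hmeasLS h hH).sub measurable_const).abs)
  have hBmeas : MeasurableSet B := by
    have : B = ⋃ h ∈ H, {p : (Fin m → Z) × (Fin m → Z) |
        ε / 2 < |(1 / m : ℝ) * ∑ i, h (p.1 i) - (1 / m : ℝ) * ∑ i, h (p.2 i)|} := by
      ext p; simp [hB, Set.mem_iUnion]
    rw [this]
    refine MeasurableSet.biUnion hcount fun h hH => ?_
    refine measurableSet_lt measurable_const ?_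
    exact (((hmeasLS h hH).comp measurable_fst).sub
      ((hmeasLS h hH).comp measurable_snd)).abs
  -- key ghost-sample step
  have hkey : ∀ S ∈ A, ENNReal.ofReal (1 - δ) ≤ μm (Prod.mk S ⁻¹' B) := by
    intro S hS
    obtain ⟨h, hH, hgt⟩ := hS
    set C : Set (Fin m → Z) :=
      {S' | ε / 2 < |(1 / m : ℝ) * ∑ i, h (S' i) - ∫ z, h z ∂D|} with hC
    have hCmeas : MeasurableSet C :=
      measurableSet_lt measurable_const (((hmeasLS h hH).sub measurable_const).abs)
    have hCle : μm C ≤ ENNReal.ofReal δ := deviation_le D hm (hmeas h hH) (hrange h hH) hε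
    have hsub : Cᶜ ⊆ Prod.mk S ⁻¹' B := by
      intro S' hS'
      simp only [hC, Set.mem_compl_iff, Set.mem_setOf_eq, not_lt] at hS'
      refine ⟨h, hH, ?_⟩
      simp only [Set.mem_setOf_eq]
      have := abs_sub_abs_le_abs_sub ((1 / m : ℝ) * ∑ i, h (S i) - ∫ z, h z ∂D)
        ((1 / m : ℝ) * ∑ i, h (S' i) - ∫ z, h z ∂D)
      have habs : |(1 / m : ℝ) * ∑ i, h (S i) - (1 / m : ℝ) * ∑ i, h (S' i)|
          = |((1 / m : ℝ) * ∑ i, h (S i) - ∫ z, h z ∂D)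
            - ((1 / m : ℝ) * ∑ i, h (S' i) - ∫ z, h z ∂D)| := by
        congr 1; ring
      rw [habs]
      linarith
    calc ENNReal.ofReal (1 - δ) = 1 - ENNReal.ofReal δ := by
          rw [ENNReal.ofReal_sub 1 hδ0, ENNReal.ofReal_one]
      _ ≤ 1 - μm C := by
          exact tsub_le_tsub_left hCle 1
      _ = μm Cᶜ := by
          rw [measure_compl hCmeas (measure_ne_top _ _)]
          simp [hμm]
      _ ≤ μm (Prod.mk S ⁻¹' B) := measure_mono hsub
  -- Fubini
  have hfub : ENNReal.ofReal (1 - δ) * μm A ≤ (μm.prod μm) B := by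
    rw [Measure.prod_apply hBmeas]
    calc ENNReal.ofReal (1 - δ) * μm A
        = ∫⁻ S in A, ENNReal.ofReal (1 - δ) ∂μm := by rw [setLIntegral_const]
      _ ≤ ∫⁻ S in A, μm (Prod.mk S ⁻¹' B) ∂μm :=
          setLIntegral_mono (measurable_measure_prodMk_left hBmeas) hkey
      _ ≤ ∫⁻ S, μm (Prod.mk S ⁻¹' B) ∂μm := setLIntegral_le_lintegral _ _
  -- conclude
  rw [hAeq]
  have hfin : (μm.prod μm) B ≠ ⊤ := measure_ne_top _ _
  have h1 : (1 - δ) * (μm A).toReal ≤ ((μm.prod μm) B).toReal := by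
    have := ENNReal.toReal_mono hfin hfub
    rwa [ENNReal.toReal_mul, ENNReal.toReal_ofReal hδ1.le] at this
  refine h1.trans ?_
  exact ENNReal.toReal_mono (measure_ne_top _ _) (measure_mono hBsub)
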